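/- Suppose the labeled space (E,L,𝔅̄) satisfies: for every finite subset {A_1,…,A_N} of 𝔅̄ and every K ≥ 1 there exists m_0 ≥ 1 such that A_{i_1}E^{≤K}A_{i_2}⋯E^{≤K}A_{i_n} = ∅ for all n > m_0 and all choices i_j ∈ {1,…,N}. Then for every representation {s_a, p_A} of (E,L,𝔅̄) in a C*-algebra, any finite self-adjoint set F = {s_{α_i} p_{A_i} s_{β_i}* : 1 ≤ i ≤ N} with A_i ∈ 𝔅̄, A_i ⊆ r(α_i) ∩ r(β_i), and α_i, β_i labeled paths or the empty word (with s of the empty word interpreted as the identity and r of the empty word as E^0) is contained in a finite-dimensional *-subalgebra. -/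

import Mathlib

/-! # Common framework for labeled graph C*-algebras

Directed graphs, finite paths, labeled spaces `(E, L, 𝔅̄)` where `𝔅̄` is the
smallest accommodating set closed under relative complements (and containing
the sink parts of its members), loops and generalized loops, representations
of labeled spaces in C*-algebras, gauge actions, infinite projections,
AF algebras, and closed two-sided ideals. -/

noncomputable section

/-- A directed graph with vertex set `V` and edge set `E`. -/
structure DirGraph (V : Type*) (E : Type*) where
  src : E → V
  rng : E → V

variable {V E 𝒜 : Type*}

/-- A (finite) path of positive length in a directed graph: a nonempty list of
composable edges. -/
structure GPath (G : DirGraph V E) where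
  edges : List E
  ne : edges ≠ []
  chain : edges.Chain' fun e f => G.rng e = G.src f

namespace GPath

variable {G : DirGraph V E}

/-- The source vertex of a path. -/
def source (p : GPath G) : V := G.src (p.edges.head p.ne)

/-- The range vertex of a path. -/
def range (p : GPath G) : V := G.rng (p.edges.getLast p.ne)

/-- The length of a path. -/
def length (p : GPath G) : ℕ := p.edges.length

/-- The label word of a path under a labeling `L`. -/
def label (L : E → 𝒜) (p : GPath G) : List 𝒜 := p.edges.map L

end GPath

/-- The set of sinks of a graph (vertices emitting no edge). -/
def DirGraph.sinks (G : DirGraph V E) : Set V := {v | ∀ e, G.src e ≠ v}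

/-- `w ∈ L*(E)`: `w` is the label of some path of positive length. -/
def IsLabelWord (G : DirGraph V E) (L : E → 𝒜) (w : List 𝒜) : Prop :=
  ∃ p : GPath G, p.label L = w

/-- The range `r(w)` of a labeled path `w`. -/
def rngW (G : DirGraph V E) (L : E → 𝒜) (w : List 𝒜) : Set V :=
  {v | ∃ p : GPath G, p.label L = w ∧ p.range = v}

/-- The relative range `r(A, w)` of a labeled path `w` with respect to `A`. -/
def relRng (G : DirGraph V E) (L : E → 𝒜) (A : Set V) (w : List 𝒜) : Set V :=
  {v | ∃ p : GPath G, p.label L = w ∧ p.source ∈ A ∧ p.range = v}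

/-- `L(A E^n)`: labels of paths of length exactly `n` with source in `A`. -/
def labelsFromLen (G : DirGraph V E) (L : E → 𝒜) (A : Set V) (n : ℕ) : Set (List 𝒜) :=
  {w | ∃ p : GPath G, p.source ∈ A ∧ p.length = n ∧ p.label L = w}

/-- `L(A E^{≤n})`: labels of paths of length between `1` and `n` with source in `A`. -/
def labelsFromLe (G : DirGraph V E) (L : E → 𝒜) (A : Set V) (n : ℕ) : Set (List 𝒜) :=
  {w | ∃ p : GPath G, p.source ∈ A ∧ p.length ≤ n ∧ p.label L = w}

/-- `L(A E^{≥n})`: labels of paths of length at least `n` (and at least `1`)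
with source in `A`. -/
def labelsFromGe (G : DirGraph V E) (L : E → 𝒜) (A : Set V) (n : ℕ) : Set (List 𝒜) :=
  {w | ∃ p : GPath G, p.source ∈ A ∧ n ≤ p.length ∧ p.label L = w}

/-- `L(E^n A)`: labels of paths of length exactly `n` with range in `A`. -/
def labelsToLen (G : DirGraph V E) (L : E → 𝒜) (n : ℕ) (A : Set V) : Set (List 𝒜) :=
  {w | ∃ p : GPath G, p.range ∈ A ∧ p.length = n ∧ p.label L = w}

/-- `L(E^{≤l} v)`: labels of paths of length between `1` and `l` with range `v`. -/
def labelsToLe (G : DirGraph V E) (L : E → 𝒜) (l : ℕ) (v : V) : Set (List 𝒜) :=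
  {w | ∃ p : GPath G, p.range = v ∧ p.length ≤ l ∧ p.label L = w}

/-- `𝔅̄`: the smallest accommodating set for `(E, L)` (containing the ranges
`r(α)` for `α ∈ L*(E)` and closed under relative ranges, finite intersections
and finite unions) that is moreover closed under relative complements and
contains `A_sk = A ∩ sinks` for every `A` belonging to it. -/
inductive Bbar (G : DirGraph V E) (L : E → 𝒜) : Set V → Prop
  | base (w : List 𝒜) (hw : IsLabelWord G L w) : Bbar G L (rngW G L w)
  | rel (A : Set V) (w : List 𝒜) (hA : Bbar G L A) (hw : IsLabelWord G L w) :
      Bbar G L (relRng G L A w)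
  | inter (A B : Set V) (hA : Bbar G L A) (hB : Bbar G L B) : Bbar G L (A ∩ B)
  | union (A B : Set V) (hA : Bbar G L A) (hB : Bbar G L B) : Bbar G L (A ∪ B)
  | diff (A B : Set V) (hA : Bbar G L A) (hB : Bbar G L B) : Bbar G L (A \ B)
  | sk (A : Set V) (hA : Bbar G L A) : Bbar G L (A ∩ G.sinks)

/-- The standing assumptions on a labeled space `(E, L, 𝔅̄)`: weakly
left-resolving, set-finite, receiver set-finite, and no sink is a source. -/
structure StandingAssumptions (G : DirGraph V E) (L : E → 𝒜) : Prop where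
  wlr : ∀ A B : Set V, Bbar G L A → Bbar G L B → ∀ w : List 𝒜, IsLabelWord G L w →
    relRng G L A w ∩ relRng G L B w = relRng G L (A ∩ B) w
  setFinite : ∀ A : Set V, Bbar G L A → ∀ n : ℕ, 1 ≤ n → (labelsFromLen G L A n).Finite
  receiverSetFinite : ∀ A : Set V, Bbar G L A → ∀ n : ℕ, 1 ≤ n → (labelsToLen G L n A).Finite
  sinkNotSource : ∀ v ∈ G.sinks, ∃ e, G.rng e = v

/-- The `n`-fold concatenation `w^n` of a word `w`. -/
def wordPow (w : List 𝒜) (n : ℕ) : List 𝒜 := (List.replicate n w).flatten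

/-- A labeled path is repeatable if all its powers `w^n`, `n ≥ 1`, are again
labeled paths. -/
def Repeatable (G : DirGraph V E) (L : E → 𝒜) (w : List 𝒜) : Prop :=
  ∀ n : ℕ, 1 ≤ n → IsLabelWord G L (wordPow w n)

/-- The generalized vertex `[v]_l`: all non-source vertices receiving exactly
the same labeled paths of length at most `l` as `v` does. -/
def gvtx (G : DirGraph V E) (L : E → 𝒜) (l : ℕ) (v : V) : Set V :=
  {u | (∃ e, G.rng e = u) ∧ labelsToLe G L l u = labelsToLe G L l v}

/-- A generalized loop at `A`: a labeled path `α ∈ L(A E^{≥1} A)`. -/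
def IsGenLoop (G : DirGraph V E) (L : E → 𝒜) (A : Set V) (α : List 𝒜) : Prop :=
  ∃ p : GPath G, p.label L = α ∧ p.source ∈ A ∧ p.range ∈ A

/-- A loop at `A`: a generalized loop `α` at `A` such that `A ⊆ r(A, α)`. -/
def IsLoop (G : DirGraph V E) (L : E → 𝒜) (A : Set V) (α : List 𝒜) : Prop :=
  IsGenLoop G L A α ∧ A ⊆ relRng G L A α

/-- The nonempty initial segments (initial paths) of a word `α`. -/
def initialSegs (α : List 𝒜) : Set (List 𝒜) := {w | w ≠ [] ∧ w <+: α}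

/-- A loop `α` at `A` has an exit if (i) the initial segments of `α` form a
proper subset of `L(A E^{≤|α|})`, or (ii) `r(A, α_{[1,i]})` contains a sink for
some `1 ≤ i ≤ |α|`, or (iii) `A` is a proper subset of `r(A, α)`. -/
def HasExitLoop (G : DirGraph V E) (L : E → 𝒜) (A : Set V) (α : List 𝒜) : Prop :=
  initialSegs α ⊂ labelsFromLe G L A α.length ∨
  (∃ k : ℕ, 1 ≤ k ∧ k ≤ α.length ∧ (relRng G L A (α.take k) ∩ G.sinks).Nonempty) ∨
  A ⊂ relRng G L A α

/-- `A_0 E^{≤K} A_1 ⋯ E^{≤K} A_m ≠ ∅`: existence of `m` consecutively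
composable paths, each of length between `1` and `K`, the `j`-th going from
`As j` to `As (j+1)`. -/
def ChainExists (G : DirGraph V E) (As : ℕ → Set V) (K m : ℕ) : Prop :=
  ∃ xs : Fin m → GPath G,
    (∀ j : Fin m, (xs j).length ≤ K ∧ (xs j).source ∈ As j.val ∧
      (xs j).range ∈ As (j.val + 1)) ∧
    ∀ (j : ℕ) (h : j + 1 < m),
      (xs ⟨j, Nat.lt_of_succ_lt h⟩).range = (xs ⟨j + 1, h⟩).source

/-- Same as `ChainExists` but with all paths of length exactly `K`
(i.e. `A_0 E^K A_1 ⋯ E^K A_m ≠ ∅`). -/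
def ChainExistsExact (G : DirGraph V E) (As : ℕ → Set V) (K m : ℕ) : Prop :=
  ∃ xs : Fin m → GPath G,
    (∀ j : Fin m, (xs j).length = K ∧ (xs j).source ∈ As j.val ∧
      (xs j).range ∈ As (j.val + 1)) ∧
    ∀ (j : ℕ) (h : j + 1 < m),
      (xs ⟨j, Nat.lt_of_succ_lt h⟩).range = (xs ⟨j + 1, h⟩).source

/-- Condition (a): for every finite family `A_1, …, A_N` in `𝔅̄` and every
`K ≥ 1` there is `m₀ ≥ 1` such that
`A_{i_1} E^{≤K} A_{i_2} ⋯ E^{≤K} A_{i_n} = ∅` (`n` sets, `n - 1` path factors)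
for all `n > m₀` and all choices of indices. -/
def CondA (G : DirGraph V E) (L : E → 𝒜) : Prop :=
  ∀ (N : ℕ) (As : Fin N → Set V), (∀ i, Bbar G L (As i)) → ∀ K : ℕ, 1 ≤ K →
    ∃ m0 : ℕ, 1 ≤ m0 ∧ ∀ n : ℕ, m0 < n → ∀ ι : ℕ → Fin N,
      ¬ ChainExists G (fun j => As (ι j)) K (n - 1)

/-- A word is agreeable (for level `l`) if it is of the form `β^k β'` with
`β, β' ∈ L(E^{≤l})` and `β'` a nonempty initial segment of `β`. -/
def AgreeableW (G : DirGraph V E) (L : E → 𝒜) (l : ℕ) (α : List 𝒜) : Prop :=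
  ∃ (k : ℕ) (β β' : List 𝒜), IsLabelWord G L β ∧ IsLabelWord G L β' ∧
    β.length ≤ l ∧ β' ≠ [] ∧ β' <+: β ∧ α = wordPow β k ++ β'

/-- A representation of the labeled space `(E, L, 𝔅̄)` in a (C*-)algebra `B`:
projections `p A`, `A ∈ 𝔅̄`, and partial isometries `s a`, `a ∈ 𝒜`, satisfying
the defining relations of a labeled graph C*-algebra. -/
structure LRep (G : DirGraph V E) (L : E → 𝒜) (B : Type*)
    [NonUnitalRing B] [StarRing B] where
  p : Set V → B
  s : 𝒜 → B
  p_empty : p ∅ = 0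
  p_sa : ∀ A : Set V, Bbar G L A → star (p A) = p A
  p_mul : ∀ A A' : Set V, Bbar G L A → Bbar G L A' → p A * p A' = p (A ∩ A')
  p_union : ∀ A A' : Set V, Bbar G L A → Bbar G L A' →
    p (A ∪ A') = p A + p A' - p (A ∩ A')
  s_pi : ∀ a : 𝒜, s a * star (s a) * s a = s a
  p_s : ∀ (A : Set V) (a : 𝒜), Bbar G L A → p A * s a = s a * p (relRng G L A [a])
  s_s : ∀ a : 𝒜, star (s a) * s a = p (rngW G L [a])
  s_orth : ∀ a b : 𝒜, a ≠ b → star (s a) * s b = 0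
  ck : ∀ A : Set V, Bbar G L A →
    p A = (∑ᶠ a ∈ {a : 𝒜 | ∃ e, G.src e ∈ A ∧ L e = a},
      s a * p (relRng G L A [a]) * star (s a)) + p (A ∩ G.sinks)

/-- `s_α` for a word `α`: the product of the partial isometries of its letters
(junk value `0` on the empty word, which is never used). -/
def sWord {B : Type*} [NonUnitalRing B] (s : 𝒜 → B) : List 𝒜 → B
  | [] => 0
  | [a] => s a
  | a :: b :: w => s a * sWord s (b :: w)

/-- The range of a word in `L^#(E)` (`none` is the empty word, with range all
of `E^0`). -/
def owordRng (G : DirGraph V E) (L : E → 𝒜) : Option (List 𝒜) → Set V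
  | none => Set.univ
  | some w => rngW G L w

/-- The relative range of a word in `L^#(E)` with respect to `A` (`none` is
the empty word, with `r(A, ε) = A`). -/
def relRngE (G : DirGraph V E) (L : E → 𝒜) (A : Set V) : Option (List 𝒜) → Set V
  | none => A
  | some w => relRng G L A w

/-- The element `s_α p_A s_β*` of a representation, where `α`, `β` are words in
`L^#(E)` (`none` being the empty word `ε` with `s_ε` the identity). -/
def LRep.elt {B : Type*} [NonUnitalRing B] [StarRing B] {G : DirGraph V E} {L : E → 𝒜}
    (rep : LRep G L B) : Option (List 𝒜) → Set V → Option (List 𝒜) → B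
  | none, A, none => rep.p A
  | some α, A, none => sWord rep.s α * rep.p A
  | none, A, some β => rep.p A * star (sWord rep.s β)
  | some α, A, some β => sWord rep.s α * rep.p A * star (sWord rep.s β)

/-- A projection `q` is infinite if there is a partial isometry `u` with
`u* u = q`, `u u* ≤ q` and `u u* ≠ q`. -/
def IsInfiniteProjection (B : Type*) [NonUnitalRing B] [StarRing B] [PartialOrder B]
    (q : B) : Prop :=
  star q = q ∧ q * q = q ∧ ∃ u : B, star u * u = q ∧ u * star u ≤ q ∧ u * star u ≠ q

/-- A C*-algebra is AF if every finite subset can be approximated within any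
`ε > 0` from a finite-dimensional *-subalgebra. -/
def IsAFAlgebra (B : Type*) [NonUnitalNormedRing B] [StarRing B] [NormedSpace ℂ B] : Prop :=
  ∀ (F : Finset B) (ε : ℝ), 0 < ε →
    ∃ D : NonUnitalStarSubalgebra ℂ B, FiniteDimensional ℂ D ∧
      ∀ x ∈ F, ∃ y ∈ (D : Set B), ‖x - y‖ < ε

/-- A gauge action for a representation: a strongly continuous action of the
circle group by *-automorphisms fixing the projections and scaling the
generating partial isometries. -/
structure GaugeAction {B : Type*} [NonUnitalCStarAlgebra B]
    (G : DirGraph V E) (L : E → 𝒜) (rep : LRep G L B) where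
  γ : Circle → B ≃⋆ₐ[ℂ] B
  γ_mul : ∀ z w : Circle, γ (z * w) = (γ w).trans (γ z)
  γ_continuous : ∀ x : B, Continuous fun z => γ z x
  γ_s : ∀ (z : Circle) (a : 𝒜), γ z (rep.s a) = (z : ℂ) • rep.s a
  γ_p : ∀ (z : Circle) (A : Set V), Bbar G L A → γ z (rep.p A) = rep.p A

/-- The representation generates `B` as a C*-algebra. -/
def GeneratesAlg {B : Type*} [NonUnitalCStarAlgebra B]
    (G : DirGraph V E) (L : E → 𝒜) (rep : LRep G L B) : Prop :=
  closure (NonUnitalStarAlgebra.adjoin ℂ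
    ({x : B | ∃ a : 𝒜, x = rep.s a} ∪ {x : B | ∃ A : Set V, Bbar G L A ∧ x = rep.p A}) : Set B)
    = Set.univ

/-- A closed two-sided ideal of a C*-algebra (as a set). -/
def IsClosedTwoSidedIdealSet (B : Type*) [NonUnitalNormedRing B] [NormedSpace ℂ B]
    (I : Set B) : Prop :=
  IsClosed I ∧ (0 : B) ∈ I ∧ (∀ x ∈ I, ∀ y ∈ I, x + y ∈ I) ∧
    (∀ (c : ℂ), ∀ x ∈ I, c • x ∈ I) ∧ ∀ x ∈ I, ∀ y : B, x * y ∈ I ∧ y * x ∈ I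

/-- The closed two-sided ideal generated by an element. -/
def closedIdealGen (B : Type*) [NonUnitalNormedRing B] [NormedSpace ℂ B] (q : B) : Set B :=
  ⋂₀ {I : Set B | IsClosedTwoSidedIdealSet B I ∧ q ∈ I}


section AuxGraph

variable {V E 𝒜 : Type*} {G : DirGraph V E} {L : E → 𝒜}

lemma gpath_append (q r : GPath G) (h : q.range = r.source) :
    ∃ p : GPath G, p.label L = q.label L ++ r.label L ∧ p.source = q.source ∧ p.range = r.range := by
  have hne : q.edges ++ r.edges ≠ [] := by simp [q.ne]
  refine ⟨⟨q.edges ++ r.edges, hne, ?_⟩, ?_, ?_, ?_⟩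
  · refine List.isChain_append.mpr ⟨q.chain, r.chain, ?_⟩
    intro x hx y hy
    rw [List.getLast?_eq_getLast q.ne] at hx
    rw [List.head?_eq_head r.ne] at hy
    cases hx; cases hy
    exact h
  · simp [GPath.label]
  · show G.src ((q.edges ++ r.edges).head hne) = q.source
    rw [List.head_append_of_ne_nil q.ne]; rfl
  · show G.rng ((q.edges ++ r.edges).getLast hne) = r.range
    rw [List.getLast_append hne]
    simp [r.ne, GPath.range]

lemma label_length (p : GPath G) : (p.label L).length = p.edges.length := by
  simp [GPath.label]

lemma gpath_split (p : GPath G) (u v : List 𝒜) (hu : u ≠ []) (hv : v ≠ [])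
    (h : p.label L = u ++ v) :
    ∃ q r : GPath G, q.label L = u ∧ r.label L = v ∧ q.source = p.source ∧
      r.range = p.range ∧ q.range = r.source := by
  have hlen : p.edges.length = u.length + v.length := by
    have := label_length (L := L) p; rw [h] at this; simpa using this.symm
  have hul : 0 < u.length := List.length_pos_iff.mpr hu
  have hvl : 0 < v.length := List.length_pos_iff.mpr hv
  have htne : p.edges.take u.length ≠ [] := by
    apply List.ne_nil_of_length_pos
    rw [List.length_take]
    omega
  have hdne : p.edges.drop u.length ≠ [] := by
    apply List.ne_nil_of_length_pos
    rw [List.length_drop]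
    omega
  refine ⟨⟨p.edges.take u.length, htne, p.chain.take _⟩,
         ⟨p.edges.drop u.length, hdne, p.chain.drop _⟩, ?_, ?_, ?_, ?_, ?_⟩
  · show (p.edges.take u.length).map L = u
    rw [List.map_take]
    show (p.label L).take u.length = u
    rw [h, List.take_left]
  · show (p.edges.drop u.length).map L = v
    rw [List.map_drop]
    show (p.label L).drop u.length = v
    rw [h, List.drop_left]
  · show G.src ((p.edges.take u.length).head htne) = p.source
    rw [List.head_take]; rfl
  · show G.rng ((p.edges.drop u.length).getLast hdne) = p.range
    rw [List.getLast_drop]; rfl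
  · have hchain : (p.edges.take u.length ++ p.edges.drop u.length).Chain'
        (fun e f => G.rng e = G.src f) := by
      rw [List.take_append_drop]; exact p.chain
    have := (List.isChain_append.mp hchain).2.2
    exact this _ (List.getLast?_eq_getLast htne) _ (List.head?_eq_head hdne)

lemma relRng_append (A : Set V) (u v : List 𝒜) (hu : u ≠ []) (hv : v ≠ []) :
    relRng G L A (u ++ v) = relRng G L (relRng G L A u) v := by
  ext x
  constructor
  · rintro ⟨p, hlab, hsrc, rfl⟩
    obtain ⟨q, r, hq, hr, hqs, hrr, hqr⟩ := gpath_split p u v hu hv hlab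
    exact ⟨r, hr, ⟨q, hq, hqs ▸ hsrc, hqr⟩, hrr⟩
  · rintro ⟨r, hr, ⟨q, hq, hqs, hqr⟩, rfl⟩
    obtain ⟨p, hlab, hps, hpr⟩ := gpath_append q r (by rw [hqr])
    exact ⟨p, by rw [hlab, hq, hr], hps ▸ hqs, hpr⟩

lemma rngW_append (u v : List 𝒜) (hu : u ≠ []) (hv : v ≠ []) :
    rngW G L (u ++ v) = relRng G L (rngW G L u) v := by
  ext x
  constructor
  · rintro ⟨p, hlab, rfl⟩
    obtain ⟨q, r, hq, hr, hqs, hrr, hqr⟩ := gpath_split p u v hu hv hlab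
    exact ⟨r, hr, ⟨q, hq, hqr⟩, hrr⟩
  · rintro ⟨r, hr, ⟨q, hq, hqr⟩, rfl⟩
    obtain ⟨p, hlab, hps, hpr⟩ := gpath_append q r (by rw [hqr])
    exact ⟨p, by rw [hlab, hq, hr], hpr⟩

lemma relRng_subset_rngW (A : Set V) (w : List 𝒜) : relRng G L A w ⊆ rngW G L w := by
  rintro x ⟨p, h1, _, h3⟩; exact ⟨p, h1, h3⟩

lemma relRng_mono {A B : Set V} (h : A ⊆ B) (w : List 𝒜) :
    relRng G L A w ⊆ relRng G L B w := by
  rintro x ⟨p, h1, h2, h3⟩; exact ⟨p, h1, h h2, h3⟩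

lemma relRng_subset_rngW_append {A : Set V} {u : List 𝒜} (hA : A ⊆ rngW G L u)
    (v : List 𝒜) (hu : u ≠ []) (hv : v ≠ []) :
    relRng G L A v ⊆ rngW G L (u ++ v) := by
  rw [rngW_append u v hu hv]
  exact relRng_mono hA v

lemma relRng_empty_of_not_word {w : List 𝒜} (h : ¬ IsLabelWord G L w) (A : Set V) :
    relRng G L A w = ∅ := by
  ext x; simp only [Set.mem_empty_iff_false, iff_false]
  rintro ⟨p, h1, _, _⟩; exact h ⟨p, h1⟩

lemma rngW_empty_of_not_word {w : List 𝒜} (h : ¬ IsLabelWord G L w) :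
    rngW G L w = ∅ := by
  ext x; simp only [Set.mem_empty_iff_false, iff_false]
  rintro ⟨p, h1, _⟩; exact h ⟨p, h1⟩

lemma isLabelWord_of_suffix {w τ : List 𝒜} (hw : IsLabelWord G L w) (hτ : τ ≠ [])
    (hsuf : τ <:+ w) : IsLabelWord G L τ := by
  obtain ⟨u, rfl⟩ := hsuf
  obtain ⟨p, hp⟩ := hw
  rcases eq_or_ne u [] with rfl | hu
  · exact ⟨p, by simpa using hp⟩
  · obtain ⟨q, r, _, hr, _, _, _⟩ := gpath_split p u τ hu hτ hp
    exact ⟨r, hr⟩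

lemma range_mem_rngW (p : GPath G) : p.range ∈ rngW G L (p.label L) := ⟨p, rfl, rfl⟩

lemma Bbar_empty {A : Set V} (hA : Bbar G L A) : Bbar G L (∅ : Set V) := by
  have := Bbar.diff A A hA hA
  simpa using this

lemma isLabelWord_single (hL : Function.Surjective L) (a : 𝒜) : IsLabelWord G L [a] := by
  obtain ⟨e, rfl⟩ := hL a
  exact ⟨⟨[e], by simp, List.isChain_singleton e⟩, rfl⟩

lemma Bbar_rngW (h0 : Bbar G L (∅ : Set V)) (w : List 𝒜) : Bbar G L (rngW G L w) := by
  by_cases h : IsLabelWord G L w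
  · exact Bbar.base w h
  · rw [rngW_empty_of_not_word h]; exact h0

lemma Bbar_relRng (h0 : Bbar G L (∅ : Set V)) {A : Set V} (hA : Bbar G L A) (w : List 𝒜) :
    Bbar G L (relRng G L A w) := by
  by_cases h : IsLabelWord G L w
  · exact Bbar.rel A w hA h
  · rw [relRng_empty_of_not_word h]; exact h0

end AuxGraph
section AuxRep
set_option linter.unusedSectionVars false

variable {V E 𝒜 : Type*} {G : DirGraph V E} {L : E → 𝒜}
variable {B : Type*} [NonUnitalRing B] [StarRing B] (rep : LRep G L B)

lemma sWord_cons (s : 𝒜 → B) (a : 𝒜) {w : List 𝒜} (hw : w ≠ []) :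
    sWord s (a :: w) = s a * sWord s w := by
  cases w with
  | nil => exact absurd rfl hw
  | cons b w' => rfl

lemma sWord_append (s : 𝒜 → B) {u v : List 𝒜} (hu : u ≠ []) (hv : v ≠ []) :
    sWord s (u ++ v) = sWord s u * sWord s v := by
  induction u with
  | nil => exact absurd rfl hu
  | cons a u' ih =>
    rcases eq_or_ne u' [] with rfl | hu'
    · exact sWord_cons s a hv
    · have h1 : ((a :: u') ++ v) = a :: (u' ++ v) := rfl
      rw [h1, sWord_cons s a (by simp [hu']), ih hu', sWord_cons s a hu', mul_assoc]

variable (hL : Function.Surjective L)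

include hL

lemma p_sWord {A : Set V} (hA : Bbar G L A) {w : List 𝒜} (hw : w ≠ []) :
    rep.p A * sWord rep.s w = sWord rep.s w * rep.p (relRng G L A w) := by
  induction w generalizing A with
  | nil => exact absurd rfl hw
  | cons a w' ih =>
    rcases eq_or_ne w' [] with rfl | hw'
    · exact rep.p_s A a hA
    · have hrel : relRng G L A (a :: w') = relRng G L (relRng G L A [a]) w' := by
        have := relRng_append (G := G) (L := L) A [a] w' (by simp) hw'
        simpa using this
      have hBa : Bbar G L (relRng G L A [a]) := Bbar.rel A [a] hA (isLabelWord_single hL a)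
      rw [sWord_cons rep.s a hw', ← mul_assoc, rep.p_s A a hA, mul_assoc,
        ih hBa hw', ← mul_assoc, hrel]

lemma star_sWord_p {A : Set V} (hA : Bbar G L A) (h0 : Bbar G L (∅ : Set V))
    {w : List 𝒜} (hw : w ≠ []) :
    star (sWord rep.s w) * rep.p A = rep.p (relRng G L A w) * star (sWord rep.s w) := by
  have := congrArg star (p_sWord rep hL hA hw)
  rw [star_mul, star_mul, rep.p_sa A hA,
    rep.p_sa _ (Bbar_relRng h0 hA w)] at this
  exact this

lemma star_sWord_sWord (h0 : Bbar G L (∅ : Set V)) {w : List 𝒜} (hw : w ≠ []) :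
    star (sWord rep.s w) * sWord rep.s w = rep.p (rngW G L w) := by
  induction w with
  | nil => exact absurd rfl hw
  | cons a w' ih =>
    rcases eq_or_ne w' [] with rfl | hw'
    · exact rep.s_s a
    · have hBa : Bbar G L (rngW G L [a]) := Bbar.base [a] (isLabelWord_single hL a)
      have hset : rngW G L (a :: w') = relRng G L (rngW G L [a]) w' := by
        have := rngW_append (G := G) (L := L) [a] w' (by simp) hw'
        simpa using this
      have hsub : relRng G L (rngW G L [a]) w' ⊆ rngW G L w' :=
        relRng_subset_rngW _ _
      rw [sWord_cons rep.s a hw', star_mul, mul_assoc, ← mul_assoc (star (rep.s a)),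
        rep.s_s a, ← mul_assoc, mul_assoc _ _ (sWord rep.s w'),
        p_sWord rep hL hBa hw', ← mul_assoc, ih hw', rep.p_mul _ _ (Bbar_rngW h0 w')
          (Bbar_relRng h0 hBa w'), hset,
        Set.inter_eq_self_of_subset_right hsub]

lemma star_sWord_sWord_prefix (h0 : Bbar G L (∅ : Set V)) {v τ : List 𝒜}
    (hv : v ≠ []) (hτ : τ ≠ []) :
    star (sWord rep.s v) * sWord rep.s (v ++ τ) =
      rep.p (rngW G L v) * sWord rep.s τ := by
  rw [sWord_append rep.s hv hτ, ← mul_assoc, star_sWord_sWord rep hL h0 hv]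

lemma star_sWord_sWord_orth (h0 : Bbar G L (∅ : Set V)) :
    ∀ (v w : List 𝒜), v ≠ [] → w ≠ [] → ¬ v <+: w → ¬ w <+: v →
    star (sWord rep.s v) * sWord rep.s w = 0 := by
  intro v
  induction v with
  | nil => intro w hv _ _ _; exact absurd rfl hv
  | cons a v' ih =>
    intro w _ hw h1 h2
    cases w with
    | nil => exact absurd rfl hw
    | cons b w' =>
      rcases eq_or_ne a b with rfl | hab
      · have hv' : v' ≠ [] := by
          rintro rfl
          exact h1 (List.cons_prefix_cons.mpr ⟨rfl, List.nil_prefix⟩)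
        have hw' : w' ≠ [] := by
          rintro rfl
          exact h2 (List.cons_prefix_cons.mpr ⟨rfl, List.nil_prefix⟩)
        have h1' : ¬ v' <+: w' := fun h => h1 (List.cons_prefix_cons.mpr ⟨rfl, h⟩)
        have h2' : ¬ w' <+: v' := fun h => h2 (List.cons_prefix_cons.mpr ⟨rfl, h⟩)
        rw [sWord_cons rep.s a hv', sWord_cons rep.s a hw', star_mul, mul_assoc,
          ← mul_assoc (star (rep.s a)), rep.s_s a,
          p_sWord rep hL (Bbar_rngW h0 [a]) hw', ← mul_assoc,
          ih w' hv' hw' h1' h2', zero_mul]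
      · rcases eq_or_ne v' [] with rfl | hv' <;> rcases eq_or_ne w' [] with rfl | hw'
        · exact rep.s_orth a b hab
        · show star (rep.s a) * sWord rep.s (b :: w') = 0
          rw [sWord_cons rep.s b hw', ← mul_assoc]
          show star (sWord rep.s [a]) * rep.s b * sWord rep.s w' = 0
          rw [show sWord rep.s [a] = rep.s a from rfl, rep.s_orth a b hab, zero_mul]
        · show star (sWord rep.s (a :: v')) * rep.s b = 0
          rw [sWord_cons rep.s a hv', star_mul, mul_assoc, rep.s_orth a b hab, mul_zero]
        · rw [sWord_cons rep.s a hv', sWord_cons rep.s b hw', star_mul, mul_assoc,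
            ← mul_assoc (star (rep.s a)), rep.s_orth a b hab, zero_mul, mul_zero]

end AuxRep
/-- Append a word to an optional word. -/
def oapp {𝒜 : Type*} (μ : Option (List 𝒜)) (τ : List 𝒜) : Option (List 𝒜) :=
  some (match μ with | none => τ | some u => u ++ τ)

section AuxElt
set_option linter.unusedSectionVars false

variable {V E 𝒜 : Type*} {G : DirGraph V E} {L : E → 𝒜}
variable {B : Type*} [NonUnitalRing B] [StarRing B] (rep : LRep G L B)

/-- The "left half" `s_μ p_C` of an element. -/
def eltL (μ : Option (List 𝒜)) (C : Set V) : B :=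
  match μ with
  | none => rep.p C
  | some w => sWord rep.s w * rep.p C

lemma p_idem {C : Set V} (hC : Bbar G L C) : rep.p C * rep.p C = rep.p C := by
  rw [rep.p_mul C C hC hC, Set.inter_self]

lemma pp_left {C D : Set V} (hC : Bbar G L C) (hD : Bbar G L D) (x : B) :
    rep.p C * (rep.p D * x) = rep.p (C ∩ D) * x := by
  rw [← mul_assoc, rep.p_mul C D hC hD]

lemma elt_eq_eltL {C : Set V} (hC : Bbar G L C) (μ ν : Option (List 𝒜)) :
    rep.elt μ C ν = eltL rep μ C * star (eltL rep ν C) := by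
  cases μ <;> cases ν <;>
    simp only [LRep.elt, eltL, star_mul, rep.p_sa C hC, mul_assoc]
  · exact (p_idem rep hC).symm
  · rw [pp_left rep hC hC, Set.inter_self]
  · rw [p_idem rep hC]
  · rw [pp_left rep hC hC, Set.inter_self]

lemma elt_empty (μ ν : Option (List 𝒜)) : rep.elt μ (∅ : Set V) ν = 0 := by
  cases μ <;> cases ν <;>
    simp only [LRep.elt, rep.p_empty, mul_zero, zero_mul]

lemma star_elt {C : Set V} (hC : Bbar G L C) (μ ν : Option (List 𝒜)) :
    star (rep.elt μ C ν) = rep.elt ν C μ := by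
  cases μ <;> cases ν <;>
    simp only [LRep.elt, star_mul, star_star, rep.p_sa C hC, mul_assoc]

lemma ppp {C D C' : Set V} (hC : Bbar G L C) (hD : Bbar G L D) (hC' : Bbar G L C') :
    rep.p C * rep.p D * rep.p C' = rep.p ((C ∩ D) ∩ C') := by
  rw [rep.p_mul C D hC hD, rep.p_mul _ _ (Bbar.inter C D hC hD) hC']

variable (hL : Function.Surjective L) (h0 : Bbar G L (∅ : Set V))

include hL h0

/-- Outer absorption: `(s_μ p_C) p_D (p_{C'} s_{ν'})* = s_μ p_{(C∩D)∩C'} s_{ν'}*`. -/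
lemma outer_proj {C D C' : Set V} (hC : Bbar G L C) (hD : Bbar G L D) (hC' : Bbar G L C')
    (μ ν' : Option (List 𝒜)) :
    eltL rep μ C * rep.p D * star (eltL rep ν' C') = rep.elt μ ((C ∩ D) ∩ C') ν' := by
  have hCD : Bbar G L (C ∩ D) := Bbar.inter C D hC hD
  cases μ <;> cases ν' <;>
    simp only [LRep.elt, eltL, star_mul, rep.p_sa C' hC', mul_assoc]
  · rw [pp_left rep hC hD, rep.p_mul _ _ hCD hC']
  · rw [pp_left rep hC hD, pp_left rep hCD hC']
  · rw [pp_left rep hC hD, rep.p_mul _ _ hCD hC']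
  · rw [pp_left rep hC hD, pp_left rep hCD hC']

/-- Left extension: `(s_μ p_C) (s_τ p_D) = s_{μτ} p_{relRng C τ ∩ D}`. -/
lemma eltL_ext {C D : Set V} (hC : Bbar G L C) (hD : Bbar G L D)
    (μ : Option (List 𝒜)) (hμ : ∀ u, μ = some u → u ≠ []) {τ : List 𝒜} (hτ : τ ≠ []) :
    eltL rep μ C * (sWord rep.s τ * rep.p D) =
      eltL rep (oapp μ τ) (relRng G L C τ ∩ D) := by
  have hrel : Bbar G L (relRng G L C τ) := Bbar_relRng h0 hC τ
  cases μ with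
  | none =>
    show rep.p C * (sWord rep.s τ * rep.p D) = sWord rep.s τ * rep.p (relRng G L C τ ∩ D)
    rw [← mul_assoc, p_sWord rep hL hC hτ, mul_assoc, rep.p_mul _ _ hrel hD]
  | some u =>
    show sWord rep.s u * rep.p C * (sWord rep.s τ * rep.p D) =
      sWord rep.s (u ++ τ) * rep.p (relRng G L C τ ∩ D)
    rw [sWord_append rep.s (hμ u rfl) hτ, mul_assoc, ← mul_assoc (rep.p C),
      p_sWord rep hL hC hτ, mul_assoc, rep.p_mul _ _ hrel hD, ← mul_assoc]

end AuxElt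
section AuxProd
set_option linter.unusedSectionVars false

variable {V E 𝒜 : Type*} {G : DirGraph V E} {L : E → 𝒜}
variable {B : Type*} [NonUnitalRing B] [StarRing B] (rep : LRep G L B)

lemma eltL_p {C D : Set V} (hC : Bbar G L C) (hD : Bbar G L D) (μ : Option (List 𝒜)) :
    eltL rep μ C * rep.p D = eltL rep μ (C ∩ D) := by
  cases μ <;> simp only [eltL, mul_assoc, rep.p_mul C D hC hD]

lemma outer0 {E' C' : Set V} (hE : Bbar G L E') (hC' : Bbar G L C')
    (ρ ν' : Option (List 𝒜)) :
    eltL rep ρ E' * star (eltL rep ν' C') = rep.elt ρ (E' ∩ C') ν' := by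
  cases ρ <;> cases ν' <;>
    simp only [LRep.elt, eltL, star_mul, rep.p_sa C' hC', mul_assoc]
  · exact rep.p_mul _ _ hE hC'
  · rw [pp_left rep hE hC']
  · rw [rep.p_mul _ _ hE hC']
  · rw [pp_left rep hE hC']

variable (hL : Function.Surjective L) (h0 : Bbar G L (∅ : Set V))
include hL h0

lemma outer_star {C D C' : Set V} (hC : Bbar G L C) (hD : Bbar G L D) (hC' : Bbar G L C')
    (μ ν' : Option (List 𝒜)) (hν' : ∀ u, ν' = some u → u ≠ []) {τ : List 𝒜} (hτ : τ ≠ []) :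
    eltL rep μ C * (rep.p D * star (sWord rep.s τ)) * star (eltL rep ν' C') =
      rep.elt μ ((relRng G L C' τ ∩ D) ∩ C) (oapp ν' τ) := by
  have hBrel : Bbar G L ((relRng G L C' τ ∩ D) ∩ C) :=
    Bbar.inter _ _ (Bbar.inter _ _ (Bbar_relRng h0 hC' τ) hD) hC
  have hstar : star (eltL rep μ C * (rep.p D * star (sWord rep.s τ)) * star (eltL rep ν' C'))
      = rep.elt (oapp ν' τ) ((relRng G L C' τ ∩ D) ∩ C) μ := by
    rw [star_mul, star_star, star_mul, star_mul, star_star, rep.p_sa D hD, ← mul_assoc,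
      eltL_ext rep hL h0 hC' hD ν' hν' hτ, outer0 rep (Bbar.inter _ _ (Bbar_relRng h0 hC' τ) hD) hC]
  have := congrArg star hstar
  rw [star_star] at this
  rw [this, star_elt rep hBrel]

theorem elt_mul_elt {C C' : Set V} (hC : Bbar G L C) (hC' : Bbar G L C')
    (μ ν μ' ν' : Option (List 𝒜))
    (hμ : ∀ u, μ = some u → u ≠ []) (hν : ∀ u, ν = some u → u ≠ [])
    (hμ' : ∀ u, μ' = some u → u ≠ []) (hν' : ∀ u, ν' = some u → u ≠ []) :
    rep.elt μ C ν * rep.elt μ' C' ν' = 0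
    ∨ (ν = none ∧ μ' = none ∧
        rep.elt μ C ν * rep.elt μ' C' ν' = rep.elt μ ((C ∩ (C ∩ C')) ∩ C') ν')
    ∨ (∃ w, w ≠ [] ∧ ν = none ∧ μ' = some w ∧
        rep.elt μ C ν * rep.elt μ' C' ν' =
          rep.elt (oapp μ w) ((relRng G L C w ∩ C') ∩ C') ν')
    ∨ (∃ v, v ≠ [] ∧ ν = some v ∧ μ' = none ∧
        rep.elt μ C ν * rep.elt μ' C' ν' =
          rep.elt μ ((relRng G L C' v ∩ (C ∩ relRng G L C' v)) ∩ C) (oapp ν' v))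
    ∨ (∃ v, v ≠ [] ∧ ν = some v ∧ μ' = some v ∧
        rep.elt μ C ν * rep.elt μ' C' ν' =
          rep.elt μ ((C ∩ ((C ∩ rngW G L v) ∩ C')) ∩ C') ν')
    ∨ (∃ v τ, v ≠ [] ∧ τ ≠ [] ∧ ν = some v ∧ μ' = some (v ++ τ) ∧
        rep.elt μ C ν * rep.elt μ' C' ν' =
          rep.elt (oapp μ τ) ((relRng G L (C ∩ (C ∩ rngW G L v)) τ ∩ C') ∩ C') ν')
    ∨ (∃ w τ, w ≠ [] ∧ τ ≠ [] ∧ ν = some (w ++ τ) ∧ μ' = some w ∧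
        rep.elt μ C ν * rep.elt μ' C' ν' =
          rep.elt μ ((relRng G L C' τ ∩ (C ∩ relRng G L (rngW G L w ∩ C') τ)) ∩ C) (oapp ν' τ)) := by
  have hgrp : ∀ a b c d : B, (a*b)*(c*d) = (a * (b*c)) * d := by
    intro a b c d
    rw [mul_assoc a b, ← mul_assoc b, ← mul_assoc]
  have hexp : rep.elt μ C ν * rep.elt μ' C' ν' =
      (eltL rep μ C * (star (eltL rep ν C) * eltL rep μ' C')) * star (eltL rep ν' C') := by
    rw [elt_eq_eltL rep hC, elt_eq_eltL rep hC', hgrp]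
  cases ν with
  | none =>
    cases μ' with
    | none =>
      refine Or.inr (Or.inl ⟨rfl, rfl, ?_⟩)
      have hmid : star (eltL rep (none : Option (List 𝒜)) C) * eltL rep (none : Option (List 𝒜)) C'
          = rep.p (C ∩ C') := by
        show star (rep.p C) * rep.p C' = rep.p (C ∩ C')
        rw [rep.p_sa C hC, rep.p_mul C C' hC hC']
      rw [hexp, hmid,
        outer_proj rep hL h0 hC (Bbar.inter C C' hC hC') hC']
    | some w =>
      have hw : w ≠ [] := hμ' w rfl
      refine Or.inr (Or.inr (Or.inl ⟨w, hw, rfl, rfl, ?_⟩))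
      have h1 : rep.elt μ C none * rep.elt (some w) C' ν' =
          ((eltL rep μ C * rep.p C) * (sWord rep.s w * rep.p C')) * star (eltL rep ν' C') := by
        rw [elt_eq_eltL rep hC, elt_eq_eltL rep hC']
        show eltL rep μ C * star (rep.p C) * ((sWord rep.s w * rep.p C') * star (eltL rep ν' C'))
          = _
        rw [rep.p_sa C hC, ← mul_assoc, mul_assoc (eltL rep μ C * rep.p C)]
      rw [h1, eltL_p rep hC hC, Set.inter_self,
        eltL_ext rep hL h0 hC hC' μ hμ hw,
        outer0 rep (Bbar.inter _ _ (Bbar_relRng h0 hC w) hC') hC']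
  | some v =>
    have hv : v ≠ [] := hν v rfl
    cases μ' with
    | none =>
      refine Or.inr (Or.inr (Or.inr (Or.inl ⟨v, hv, rfl, rfl, ?_⟩)))
      have hmid : star (eltL rep (some v) C) * eltL rep (none : Option (List 𝒜)) C'
          = rep.p (C ∩ relRng G L C' v) * star (sWord rep.s v) := by
        show star (sWord rep.s v * rep.p C) * rep.p C' = _
        rw [star_mul, rep.p_sa C hC, mul_assoc,
          star_sWord_p rep hL hC' h0 hv, pp_left rep hC (Bbar_relRng h0 hC' v)]
      rw [hexp, hmid, outer_star rep hL h0 hC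
        (Bbar.inter C (relRng G L C' v) hC (Bbar_relRng h0 hC' v)) hC' μ ν' hν' hv]
    | some w =>
      have hw : w ≠ [] := hμ' w rfl
      by_cases hvw : v <+: w
      · obtain ⟨τ, rfl⟩ := hvw
        rcases eq_or_ne τ [] with rfl | hτ
        · -- v = w
          simp only [List.append_nil] at hexp ⊢
          refine Or.inr (Or.inr (Or.inr (Or.inr (Or.inl ⟨v, hv, rfl, rfl, ?_⟩))))
          have hmid : star (eltL rep (some v) C) * eltL rep (some v) C'
              = rep.p ((C ∩ rngW G L v) ∩ C') := by
            show star (sWord rep.s v * rep.p C) * (sWord rep.s v * rep.p C') = _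
            rw [star_mul, rep.p_sa C hC, mul_assoc, ← mul_assoc (star (sWord rep.s v)),
              star_sWord_sWord rep hL h0 hv, pp_left rep hC (Bbar_rngW h0 v),
              rep.p_mul _ _ (Bbar.inter C _ hC (Bbar_rngW h0 v)) hC']
          rw [hexp, hmid,
            outer_proj rep hL h0 hC (Bbar.inter _ _ (Bbar.inter C _ hC (Bbar_rngW h0 v)) hC') hC']
        · -- w = v ++ τ
          refine Or.inr (Or.inr (Or.inr (Or.inr (Or.inr (Or.inl ⟨v, τ, hv, hτ, rfl, rfl, ?_⟩)))))
          have hD1 : Bbar G L (C ∩ rngW G L v) := Bbar.inter C _ hC (Bbar_rngW h0 v)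
          have hmid : star (eltL rep (some v) C) * eltL rep (some (v ++ τ)) C'
              = rep.p (C ∩ rngW G L v) * (sWord rep.s τ * rep.p C') := by
            show star (sWord rep.s v * rep.p C) * (sWord rep.s (v ++ τ) * rep.p C') = _
            rw [star_mul, rep.p_sa C hC, mul_assoc, ← mul_assoc (star (sWord rep.s v)),
              star_sWord_sWord_prefix rep hL h0 hv hτ,
              mul_assoc (rep.p (rngW G L v)), pp_left rep hC (Bbar_rngW h0 v)]
          rw [hexp, hmid, ← mul_assoc (eltL rep μ C), eltL_p rep hC hD1 μ,
            eltL_ext rep hL h0 (Bbar.inter C _ hC hD1) hC' μ hμ hτ,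
            outer0 rep (Bbar.inter _ _ (Bbar_relRng h0 (Bbar.inter C _ hC hD1) τ) hC') hC']
      · by_cases hwv : w <+: v
        · obtain ⟨τ, rfl⟩ := hwv
          have hτ : τ ≠ [] := by rintro rfl; exact hvw (by simp)
          refine Or.inr (Or.inr (Or.inr (Or.inr (Or.inr (Or.inr ⟨w, τ, hw, hτ, rfl, rfl, ?_⟩)))))
          have hBwc : Bbar G L (rngW G L w ∩ C') := Bbar.inter _ _ (Bbar_rngW h0 w) hC'
          have hmid : star (eltL rep (some (w ++ τ)) C) * eltL rep (some w) C'
              = rep.p (C ∩ relRng G L (rngW G L w ∩ C') τ) * star (sWord rep.s τ) := by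
            show star (sWord rep.s (w ++ τ) * rep.p C) * (sWord rep.s w * rep.p C') = _
            rw [sWord_append rep.s hw hτ, star_mul, star_mul, rep.p_sa C hC,
              mul_assoc, mul_assoc, ← mul_assoc (star (sWord rep.s w)),
              star_sWord_sWord rep hL h0 hw,
              rep.p_mul _ _ (Bbar_rngW h0 w) hC',
              star_sWord_p rep hL hBwc h0 hτ, pp_left rep hC (Bbar_relRng h0 hBwc τ)]
          rw [hexp, hmid, outer_star rep hL h0 hC
            (Bbar.inter C _ hC (Bbar_relRng h0 hBwc τ)) hC' μ ν' hν' hτ]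
        · refine Or.inl ?_
          have hmid : star (eltL rep (some v) C) * eltL rep (some w) C' = 0 := by
            show star (sWord rep.s v * rep.p C) * (sWord rep.s w * rep.p C') = 0
            rw [star_mul, rep.p_sa C hC, mul_assoc, ← mul_assoc (star (sWord rep.s v)),
              star_sWord_sWord_orth rep hL h0 v w hv hw hvw hwv, zero_mul, mul_zero]
          rw [hexp, hmid, mul_zero, zero_mul]

end AuxProd
section AuxComb
set_option linter.unusedSectionVars false

variable {V E 𝒜 : Type*} {G : DirGraph V E} {L : E → 𝒜}

/-- Flattens of nonempty lists of at most `k` pieces from `S`. -/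
def flattens (S : Set (List 𝒜)) (k : ℕ) : Set (List 𝒜) :=
  {w | ∃ l : List (List 𝒜), l ≠ [] ∧ l.length ≤ k ∧ (∀ x ∈ l, x ∈ S) ∧ w = l.flatten}

lemma flattens_finite {S : Set (List 𝒜)} (hS : S.Finite) (k : ℕ) :
    (flattens S k).Finite := by
  induction k with
  | zero =>
    convert Set.finite_empty
    ext w
    simp only [flattens, Set.mem_setOf_eq, Set.mem_empty_iff_false, iff_false]
    rintro ⟨l, hl, hlen, -, -⟩
    exact hl (List.length_eq_zero_iff.mp (Nat.le_zero.mp hlen))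
  | succ k ih =>
    apply Set.Finite.subset (hS.union (ih.union (Set.Finite.image2 (· ++ ·) hS ih)))
    rintro w ⟨l, hl, hlen, hmem, rfl⟩
    cases l with
    | nil => exact absurd rfl hl
    | cons σ l' =>
      rcases eq_or_ne l' [] with rfl | hl'
      · left; simpa using hmem σ (by simp)
      · right; right
        exact Set.mem_image2_of_mem (hmem σ (by simp))
          ⟨l', hl', by simp at hlen; omega,
            fun x hx => hmem x (by simp [hx]), rfl⟩

lemma suffix_append_cases {τ a b : List 𝒜} (h : τ <:+ a ++ b) :
    τ <:+ b ∨ ∃ τ₁, τ₁ <:+ a ∧ τ₁ ≠ [] ∧ τ = τ₁ ++ b := by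
  rcases List.suffix_or_suffix_of_suffix h (List.suffix_append a b) with h1 | h1
  · exact Or.inl h1
  · obtain ⟨τ₁, rfl⟩ := h1
    rcases eq_or_ne τ₁ [] with rfl | hτ₁
    · exact Or.inl (by simp)
    · right
      obtain ⟨u, hu⟩ := h
      refine ⟨τ₁, ⟨u, ?_⟩, hτ₁, rfl⟩
      have : (u ++ τ₁) ++ b = a ++ b := by simpa [List.append_assoc] using hu
      exact (List.append_cancel_right this)

lemma suffix_of_flattens {S : Set (List 𝒜)}
    (hSsuf : ∀ σ ∈ S, ∀ τ, τ ≠ [] → τ <:+ σ → τ ∈ S) :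
    ∀ (l : List (List 𝒜)), (∀ x ∈ l, x ∈ S) → ∀ τ, τ ≠ [] → τ <:+ l.flatten →
      ∃ l' : List (List 𝒜), l' ≠ [] ∧ l'.length ≤ l.length ∧ (∀ x ∈ l', x ∈ S) ∧
        τ = l'.flatten := by
  intro l
  induction l with
  | nil =>
    intro _ τ hτ hsuf
    simp only [List.flatten_nil] at hsuf
    exact absurd (List.suffix_nil.mp hsuf) hτ
  | cons σ l ih =>
    intro hmem τ hτ hsuf
    rw [List.flatten_cons] at hsuf
    rcases suffix_append_cases hsuf with h | ⟨τ₁, hτ₁σ, hτ₁ne, rfl⟩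
    · obtain ⟨l', h1, h2, h3, h4⟩ := ih (fun x hx => hmem x (by simp [hx])) τ hτ h
      exact ⟨l', h1, by simpa using Nat.le_succ_of_le h2, h3, h4⟩
    · refine ⟨τ₁ :: l, by simp, by simp, ?_, by simp⟩
      intro x hx
      rcases List.mem_cons.mp hx with rfl | hx
      · exact hSsuf σ (hmem σ (by simp)) x hτ₁ne hτ₁σ
      · exact hmem x (by simp [hx])

lemma chainExists_of_list (ps : List (GPath G)) (Bs : ℕ → Set V) (K : ℕ)
    (hcomp : ps.Chain' (fun x y => x.range = y.source))
    (hcond : ∀ (k : ℕ) (h : k < ps.length), (ps.get ⟨k, h⟩).length ≤ K ∧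
      (ps.get ⟨k, h⟩).source ∈ Bs k ∧ (ps.get ⟨k, h⟩).range ∈ Bs (k + 1)) :
    ChainExists G Bs K ps.length := by
  refine ⟨fun j => ps.get ⟨j.1, j.2⟩, fun j => hcond j.1 j.2, ?_⟩
  intro j hj
  exact List.isChain_iff_getElem.mp hcomp j (by omega)

lemma chainExists_congr {Bs Bs' : ℕ → Set V} {K m : ℕ}
    (h : ∀ j ≤ m, Bs j = Bs' j) (hc : ChainExists G Bs K m) : ChainExists G Bs' K m := by
  obtain ⟨xs, h1, h2⟩ := hc
  refine ⟨xs, fun j => ?_, h2⟩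
  have e1 := h j.val (le_of_lt j.2)
  have e2 := h (j.val + 1) j.2
  rw [← e1, ← e2]
  exact h1 j

lemma pieces_to_paths :
    ∀ (l : List (List 𝒜)), l ≠ [] → (∀ σ ∈ l, σ ≠ []) → ∀ (p : GPath G),
      p.label L = l.flatten →
      ∃ ps : List (GPath G), ps.length = l.length ∧
        ps.Chain' (fun x y => x.range = y.source) ∧
        (∀ (k : ℕ) (hk : k < ps.length), (ps.get ⟨k, hk⟩).label L = l.getD k []) ∧
        (∀ (hk : 0 < ps.length), (ps.get ⟨0, hk⟩).source = p.source) := by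
  intro l
  induction l with
  | nil => intro h; exact absurd rfl h
  | cons σ l ih =>
    intro _ hne p hp
    rcases eq_or_ne l [] with rfl | hl
    · refine ⟨[p], rfl, List.isChain_singleton p, ?_, ?_⟩
      · intro k hk
        cases k with
        | zero => simpa using hp
        | succ k => simp at hk
      · intro _; rfl
    · have hσ : σ ≠ [] := hne σ (by simp)
      have hfl : l.flatten ≠ [] := by
        rw [List.flatten_ne_nil_iff]
        exact ⟨l.head hl, List.head_mem hl, hne _ (by simp [List.head_mem hl])⟩
      rw [List.flatten_cons] at hp
      obtain ⟨q, r, hq, hr, hqs, hrr, hqr⟩ := gpath_split p σ l.flatten hσ hfl hp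
      obtain ⟨ps, h1, h2, h3, h4⟩ := ih hl (fun x hx => hne x (by simp [hx])) r hr
      have hpsne : ps ≠ [] := by
        apply List.ne_nil_of_length_pos
        rw [h1]
        exact List.length_pos_iff.mpr hl
      refine ⟨q :: ps, by simpa using h1, ?_, ?_, ?_⟩
      · refine List.isChain_cons.mpr ⟨?_, h2⟩
        intro y hy
        rw [List.head?_eq_head hpsne] at hy
        cases hy
        rw [hqr]
        have := h4 (List.length_pos_iff.mpr hpsne)
        cases ps with
        | nil => exact absurd rfl hpsne
        | cons x ps' => exact this.symm
      · intro k hk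
        cases k with
        | zero => simpa using hq
        | succ k =>
          have hk' : k < ps.length := by simpa using hk
          simpa using h3 k hk'
      · intro _; exact hqs


lemma getD_mem_of_lt {α : Type*} {l : List α} {j : ℕ} (h : j < l.length) (d : α) :
    l.getD j d ∈ l := by
  rw [List.getD_eq_getElem l d h]; exact l.getElem_mem h

lemma gpath_length_label (p : GPath G) : p.length = (p.label L).length := by
  simp [GPath.length, GPath.label]

variable {M : ℕ} {f : Fin M → Set V} {K m0 : ℕ}

lemma rngW_flatten_empty (i0 : Fin M)
    (hno : ∀ n, m0 < n → ∀ ι : ℕ → Fin M, ¬ ChainExists G (fun j => f (ι j)) K (n - 1))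
    (l : List (List 𝒜)) (hl : l ≠ []) (hne : ∀ σ ∈ l, σ ≠ [])
    (hmem : ∀ σ ∈ l, ∃ i, f i = rngW G L σ)
    (hlen : ∀ σ ∈ l, σ.length ≤ K)
    (ht : m0 < l.length) : rngW G L (l.flatten) = ∅ := by
  by_contra h
  obtain ⟨v, hv⟩ := Set.nonempty_iff_ne_empty.mpr h
  obtain ⟨p, hp, -⟩ := hv
  obtain ⟨ps, h1, h2, h3, -⟩ := pieces_to_paths l hl hne p hp
  have hlpos : 0 < l.length := List.length_pos_iff.mpr hl
  have htail : ps.tail.length = l.length - 1 := by rw [List.length_tail, h1]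
  have hchain : ChainExists G (fun j => rngW G L (l.getD j [])) K ps.tail.length := by
    apply chainExists_of_list _ _ _ h2.tail
    intro k hk
    have hk1 : k + 1 < ps.length := by
      rw [List.length_tail] at hk; omega
    have hk0 : k < ps.length := by omega
    have hget : ps.tail.get ⟨k, hk⟩ = ps.get ⟨k + 1, hk1⟩ := List.get_tail ps k hk
    have hkl : k + 1 < l.length := by omega
    have hkl0 : k < l.length := by omega
    refine ⟨?_, ?_, ?_⟩
    · rw [hget, gpath_length_label (L := L), h3 (k + 1) hk1]
      exact hlen _ (getD_mem_of_lt hkl [])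
    · rw [hget, ← (show (ps.get ⟨k, hk0⟩).range = (ps.get ⟨k + 1, hk1⟩).source from
        List.isChain_iff_getElem.mp h2 k (by omega))]
      have := range_mem_rngW (L := L) (ps.get ⟨k, hk0⟩)
      rwa [h3 k hk0] at this
    · rw [hget]
      have := range_mem_rngW (L := L) (ps.get ⟨k + 1, hk1⟩)
      rwa [h3 (k + 1) hk1] at this
  classical
  set ι : ℕ → Fin M := fun j =>
    if h : j < l.length then Classical.choose (hmem _ (getD_mem_of_lt h ([] : List 𝒜)))
    else i0 with hι
  refine hno l.length ht ι ?_
  rw [← htail]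
  refine chainExists_congr ?_ hchain
  intro j hj
  have hjl : j < l.length := by rw [htail] at hj; omega
  simp only [hι, hjl, dif_pos]
  exact (Classical.choose_spec (hmem _ (getD_mem_of_lt hjl ([] : List 𝒜)))).symm

lemma relRng_flatten_empty (i0 : Fin M)
    (hno : ∀ n, m0 < n → ∀ ι : ℕ → Fin M, ¬ ChainExists G (fun j => f (ι j)) K (n - 1))
    (b : Set V) (hb : ∃ i, f i = b)
    (l : List (List 𝒜)) (hl : l ≠ []) (hne : ∀ σ ∈ l, σ ≠ [])
    (hmem : ∀ σ ∈ l, ∃ i, f i = rngW G L σ)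
    (hlen : ∀ σ ∈ l, σ.length ≤ K)
    (ht : m0 ≤ l.length) : relRng G L b (l.flatten) = ∅ := by
  by_contra h
  obtain ⟨v, hv⟩ := Set.nonempty_iff_ne_empty.mpr h
  obtain ⟨p, hp, hsrc, -⟩ := hv
  obtain ⟨ps, h1, h2, h3, h4⟩ := pieces_to_paths l hl hne p hp
  have hlpos : 0 < l.length := List.length_pos_iff.mpr hl
  have hchain : ChainExists G
      (fun j => if j = 0 then b else rngW G L (l.getD (j - 1) [])) K ps.length := by
    apply chainExists_of_list _ _ _ h2
    intro k hk
    have hkl : k < l.length := by omega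
    refine ⟨?_, ?_, ?_⟩
    · rw [gpath_length_label (L := L), h3 k hk]
      exact hlen _ (getD_mem_of_lt hkl [])
    · cases k with
      | zero => simpa using (h4 (by omega)).symm ▸ hsrc
      | succ k =>
        have hk0 : k < ps.length := by omega
        simp only [Nat.succ_ne_zero, if_false, Nat.add_sub_cancel]
        rw [← (show (ps.get ⟨k, hk0⟩).range = (ps.get ⟨k + 1, hk⟩).source from
          List.isChain_iff_getElem.mp h2 k (by omega))]
        have := range_mem_rngW (L := L) (ps.get ⟨k, hk0⟩)
        rwa [h3 k hk0] at this
    · simp only [Nat.succ_ne_zero, if_false, Nat.add_sub_cancel]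
      have := range_mem_rngW (L := L) (ps.get ⟨k, hk⟩)
      rwa [h3 k hk] at this
  classical
  set ι : ℕ → Fin M := fun j =>
    if j = 0 then Classical.choose hb
    else if h : j - 1 < l.length then
      Classical.choose (hmem _ (getD_mem_of_lt h ([] : List 𝒜)))
    else i0 with hι
  refine hno (l.length + 1) (by omega) ι ?_
  have hmeq : l.length + 1 - 1 = ps.length := by omega
  rw [hmeq]
  apply chainExists_congr (Bs := fun j => if j = 0 then b else rngW G L (l.getD (j - 1) []))
    ?_ hchain
  intro j hj
  rw [hι]
  cases j with
  | zero => simpa using (Classical.choose_spec hb).symm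
  | succ j =>
    have hjl : j < l.length := by omega
    simp only [Nat.succ_ne_zero, if_false, Nat.add_sub_cancel, hjl, dif_pos]
    exact (Classical.choose_spec (hmem _ (getD_mem_of_lt hjl ([] : List 𝒜)))).symm
end AuxComb
section AuxFD
set_option linter.unusedSectionVars false

variable {B : Type*} [NonUnitalCStarAlgebra B]

lemma span_closed_fd (X : Set B) (hfin : X.Finite)
    (hmul : ∀ x ∈ X, ∀ y ∈ X, x * y ∈ X) (hstar : ∀ x ∈ X, star x ∈ X) :
    ∃ D : NonUnitalStarSubalgebra ℂ B, FiniteDimensional ℂ D ∧ X ⊆ (D : Set B) := by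
  set M := Submodule.span ℂ X with hM
  have h1 : ∀ x ∈ X, ∀ b ∈ M, x * b ∈ M := by
    intro x hx b hb
    induction hb using Submodule.span_induction with
    | mem y hy => exact Submodule.subset_span (hmul x hx y hy)
    | zero => rw [mul_zero]; exact M.zero_mem
    | add a b _ _ ha hb => rw [mul_add]; exact M.add_mem ha hb
    | smul c a _ ha => rw [mul_smul_comm]; exact M.smul_mem c ha
  have hmul' : ∀ a ∈ M, ∀ b ∈ M, a * b ∈ M := by
    intro a ha b hb
    induction ha using Submodule.span_induction with
    | mem x hx => exact h1 x hx b hb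
    | zero => rw [zero_mul]; exact M.zero_mem
    | add a a' _ _ ha ha' => rw [add_mul]; exact M.add_mem ha ha'
    | smul c a _ ha => rw [smul_mul_assoc]; exact M.smul_mem c ha
  have hstar' : ∀ a ∈ M, star a ∈ M := by
    intro a ha
    induction ha using Submodule.span_induction with
    | mem x hx => exact Submodule.subset_span (hstar x hx)
    | zero => rw [star_zero]; exact M.zero_mem
    | add a b _ _ ha hb => rw [star_add]; exact M.add_mem ha hb
    | smul c a _ ha => rw [star_smul]; exact M.smul_mem _ ha
  refine ⟨{ carrier := M
            add_mem' := fun ha hb => M.add_mem ha hb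
            zero_mem' := M.zero_mem
            mul_mem' := fun ha hb => hmul' _ ha _ hb
            smul_mem' := fun c x hx => M.smul_mem c hx
            star_mem' := fun hx => hstar' _ hx }, ?_, ?_⟩
  · have hfd : FiniteDimensional ℂ M := FiniteDimensional.span_of_finite ℂ hfin
    exact FiniteDimensional.of_injective
      (⟨⟨fun x => (⟨x.1, x.2⟩ : M), fun _ _ => rfl⟩, fun _ _ => rfl⟩ :
        _ →ₗ[ℂ] M)
      (fun x y hxy => Subtype.ext (congrArg Subtype.val hxy))
  · exact fun x hx => Submodule.subset_span hx

end AuxFD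
section AuxMore
set_option linter.unusedSectionVars false

variable {V E 𝒜 : Type*} {G : DirGraph V E} {L : E → 𝒜}

lemma relRng_of_empty (w : List 𝒜) : relRng G L (∅ : Set V) w = ∅ := by
  ext x
  simp only [Set.mem_empty_iff_false, iff_false]
  rintro ⟨p, -, h, -⟩
  exact h

lemma isLabelWord_ne_nil {w : List 𝒜} (h : IsLabelWord G L w) : w ≠ [] := by
  obtain ⟨p, rfl⟩ := h
  simp [GPath.label, p.ne]

lemma flatten_ne_nil {S : Set (List 𝒜)} (hS : ∀ σ ∈ S, σ ≠ [])
    {l : List (List 𝒜)} (hl : l ≠ []) (hmem : ∀ x ∈ l, x ∈ S) : l.flatten ≠ [] := by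
  rw [List.flatten_ne_nil_iff]
  exact ⟨l.head hl, List.head_mem hl, hS _ (hmem _ (List.head_mem hl))⟩

lemma Bbar_sInter_finset {F : Finset (Set V)} (hne : F.Nonempty)
    (h : ∀ g ∈ F, Bbar G L g) : Bbar G L (⋂₀ (F : Set (Set V))) := by
  induction hne using Finset.Nonempty.cons_induction with
  | singleton a => simpa using h a (by simp)
  | cons a s ha hs ih =>
    rw [Finset.coe_cons, Set.sInter_insert]
    exact Bbar.inter _ _ (h a (by simp)) (ih fun g hg => h g (by simp [hg]))

lemma relRng_sInter
    (hwlr : ∀ A B : Set V, Bbar G L A → Bbar G L B → ∀ w : List 𝒜, IsLabelWord G L w →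
      relRng G L A w ∩ relRng G L B w = relRng G L (A ∩ B) w)
    (h0 : Bbar G L (∅ : Set V))
    {F : Finset (Set V)} (hne : F.Nonempty) (hB : ∀ g ∈ F, Bbar G L g) (w : List 𝒜) :
    relRng G L (⋂₀ (F : Set (Set V))) w =
      ⋂₀ ((fun g => relRng G L g w) '' (F : Set (Set V))) := by
  by_cases hw : IsLabelWord G L w
  · induction hne using Finset.Nonempty.cons_induction with
    | singleton a => simp
    | cons a s ha hs ih =>
      rw [Finset.coe_cons, Set.sInter_insert, Set.image_insert_eq, Set.sInter_insert,
        ← ih (fun g hg => hB g (by simp [hg])),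
        hwlr a (⋂₀ (s : Set (Set V))) (hB a (by simp))
          (Bbar_sInter_finset hs fun g hg => hB g (by simp [hg])) w hw]
  · obtain ⟨g0, hg0⟩ := hne
    have h1 : relRng G L (⋂₀ (F : Set (Set V))) w = ∅ := relRng_empty_of_not_word hw _
    have h2 : ⋂₀ ((fun g => relRng G L g w) '' (F : Set (Set V))) ⊆ relRng G L g0 w :=
      Set.sInter_subset_of_mem ⟨g0, hg0, rfl⟩
    rw [h1, relRng_empty_of_not_word hw g0] at *
    exact (Set.subset_empty_iff.mp h2).symm

lemma suffix_finite (w : List 𝒜) : {σ : List 𝒜 | σ <:+ w}.Finite := by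
  apply Set.Finite.subset (Set.finite_range (fun k : Fin (w.length + 1) => w.drop k))
  rintro σ ⟨u, rfl⟩
  exact ⟨⟨u.length, by simp⟩, by simp [List.drop_left]⟩

end AuxMore
/-- content of the proof of Theorem 4.4. If `(E, L, 𝔅̄)`
satisfies condition (a), then for every representation `{s_a, p_A}` in a
C*-algebra, any finite self-adjoint set
`F = {s_{α_i} p_{A_i} s_{β_i}* : 1 ≤ i ≤ N}` (with `A_i ∈ 𝔅̄`,
`A_i ⊆ r(α_i) ∩ r(β_i)`, and `α_i, β_i` labeled paths or the empty word) is
contained in a finite-dimensional *-subalgebra. -/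
theorem condA_finite_selfadjoint_in_finite_dim {V E 𝒜 B : Type*}
    [Countable V] [Countable E] [Countable 𝒜]
    [NonUnitalCStarAlgebra B]
    (G : DirGraph V E) (L : E → 𝒜) (hL : Function.Surjective L)
    (sa : StandingAssumptions G L)
    (hCondA : CondA G L)
    (rep : LRep G L B)
    (N : ℕ) (αs βs : Fin N → Option (List 𝒜)) (As : Fin N → Set V)
    (hAs : ∀ i, Bbar G L (As i))
    (hαs : ∀ (i : Fin N) (w : List 𝒜), αs i = some w → IsLabelWord G L w)
    (hβs : ∀ (i : Fin N) (w : List 𝒜), βs i = some w → IsLabelWord G L w)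
    (hsub : ∀ i, As i ⊆ owordRng G L (αs i) ∩ owordRng G L (βs i))
    (hselfadj : ∀ i, ∃ j,
      star (rep.elt (αs i) (As i) (βs i)) = rep.elt (αs j) (As j) (βs j)) :
    ∃ D : NonUnitalStarSubalgebra ℂ B, FiniteDimensional ℂ D ∧
      ∀ i, rep.elt (αs i) (As i) (βs i) ∈ D := by
  classical
  rcases Nat.eq_zero_or_pos N with hN | hN
  · subst hN
    obtain ⟨D, hD, -⟩ := span_closed_fd ({0} : Set B) (Set.finite_singleton 0)
      (by simp) (by simp)
    exact ⟨D, hD, fun i => i.elim0⟩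
  have i0 : Fin N := ⟨0, hN⟩
  have h0 : Bbar G L (∅ : Set V) := Bbar_empty (hAs i0)
  -- the set of pieces: nonempty suffixes of the words appearing in F
  set S : Set (List 𝒜) :=
    {σ | σ ≠ [] ∧ ∃ w : List 𝒜, σ <:+ w ∧ ∃ i, (αs i = some w ∨ βs i = some w)} with hSdef
  have hSne : ∀ σ ∈ S, σ ≠ [] := fun σ hσ => hσ.1
  have hWw : ∀ (i : Fin N) (w : List 𝒜), (αs i = some w ∨ βs i = some w) → IsLabelWord G L w := by
    rintro i w (h | h)
    · exact hαs i w h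
    · exact hβs i w h
  have hSword : ∀ σ ∈ S, IsLabelWord G L σ := by
    rintro σ ⟨hne, w, hsuf, i, hw⟩
    exact isLabelWord_of_suffix (hWw i w hw) hne hsuf
  have hSsuf : ∀ σ ∈ S, ∀ τ, τ ≠ [] → τ <:+ σ → τ ∈ S := by
    rintro σ ⟨hne, w, hsuf, i, hw⟩ τ hτ hτσ
    exact ⟨hτ, w, hτσ.trans hsuf, i, hw⟩
  have hSfin : S.Finite := by
    apply Set.Finite.subset (Set.finite_iUnion
      (fun i : Fin N => (suffix_finite ((αs i).getD [])).union
        (suffix_finite ((βs i).getD []))))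
    rintro σ ⟨hne, w, hsuf, i, (hw | hw)⟩
    · refine Set.mem_iUnion.mpr ⟨i, Or.inl ?_⟩
      show σ <:+ (αs i).getD []
      rw [hw]; exact hsuf
    · refine Set.mem_iUnion.mpr ⟨i, Or.inr ?_⟩
      show σ <:+ (βs i).getD []
      rw [hw]; exact hsuf
  set K : ℕ := 1 + Finset.univ.sup
    (fun i : Fin N => max ((αs i).getD []).length ((βs i).getD []).length) with hKdef
  have hK1 : 1 ≤ K := by omega
  have hSK : ∀ σ ∈ S, σ.length ≤ K := by
    rintro σ ⟨hne, w, hsuf, i, hw⟩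
    have h1 : σ.length ≤ w.length := hsuf.length_le
    have h2 : w.length ≤ max ((αs i).getD []).length ((βs i).getD []).length := by
      rcases hw with hw | hw <;> rw [hw] <;> simp
    have h3 := Finset.le_sup (f := fun i : Fin N =>
      max ((αs i).getD []).length ((βs i).getD []).length) (Finset.mem_univ i)
    omega
  -- the finite family of Bbar sets for condition (a)
  set ℱ : Set (Set V) := Set.range As ∪ (rngW G L '' S) with hFdef
  have hFfin : ℱ.Finite := (Set.finite_range As).union (hSfin.image _)
  have hFbbar : ∀ X ∈ ℱ, Bbar G L X := by
    rintro X (⟨i, rfl⟩ | ⟨σ, hσ, rfl⟩)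
    · exact hAs i
    · exact Bbar.base σ (hSword σ hσ)
  set Ffin : Finset (Set V) := hFfin.toFinset with hFfindef
  have hAmem : As i0 ∈ Ffin := hFfin.mem_toFinset.mpr (Or.inl ⟨i0, rfl⟩)
  set M : ℕ := Ffin.card with hMdef
  set f : Fin M → Set V := fun j => (Ffin.equivFin.symm j).1 with hfdef
  have hf : ∀ j, Bbar G L (f j) :=
    fun j => hFbbar _ (hFfin.mem_toFinset.mp (Ffin.equivFin.symm j).2)
  have hfsurj : ∀ X ∈ ℱ, ∃ j, f j = X := by
    intro X hX
    refine ⟨Ffin.equivFin ⟨X, hFfin.mem_toFinset.mpr hX⟩, ?_⟩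
    simp [hfdef]
  obtain ⟨m0, hm01, hno⟩ := hCondA M f hf K hK1
  have i0' : Fin M := Ffin.equivFin ⟨As i0, hAmem⟩
  -- emptiness lemmas from condition (a)
  have hErngW : ∀ l : List (List 𝒜), l ≠ [] → (∀ σ ∈ l, σ ∈ S) → m0 < l.length →
      rngW G L l.flatten = ∅ := by
    intro l h1 h2 h3
    exact rngW_flatten_empty i0' hno l h1 (fun σ hσ => hSne σ (h2 σ hσ))
      (fun σ hσ => hfsurj _ (Or.inr ⟨σ, h2 σ hσ, rfl⟩))
      (fun σ hσ => hSK σ (h2 σ hσ)) h3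
  have hErel : ∀ b ∈ ℱ, ∀ l : List (List 𝒜), l ≠ [] → (∀ σ ∈ l, σ ∈ S) →
      m0 ≤ l.length → relRng G L b l.flatten = ∅ := by
    intro b hb l h1 h2 h3
    exact relRng_flatten_empty i0' hno b (hfsurj b hb) l h1
      (fun σ hσ => hSne σ (h2 σ hσ))
      (fun σ hσ => hfsurj _ (Or.inr ⟨σ, h2 σ hσ, rfl⟩))
      (fun σ hσ => hSK σ (h2 σ hσ)) h3
  -- canonical families
  set InG : Set (Set V) := ({∅} : Set (Set V)) ∪ ℱ ∪
    {g | ∃ b ∈ ℱ, ∃ l : List (List 𝒜), l ≠ [] ∧ (∀ x ∈ l, x ∈ S) ∧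
      g = relRng G L b l.flatten} with hInGdef
  set InC : Set (Set V) :=
    {C | ∃ Fs : Finset (Set V), Fs.Nonempty ∧ ↑Fs ⊆ InG ∧ C = ⋂₀ (Fs : Set (Set V))}
    with hInCdef
  set InW : Set (Option (List 𝒜)) := insert none
    {o | ∃ l : List (List 𝒜), l ≠ [] ∧ (∀ x ∈ l, x ∈ S) ∧ o = some l.flatten} with hInWdef
  have hInG_bbar : ∀ g ∈ InG, Bbar G L g := by
    rintro g (((rfl : g = ∅) | hg) | ⟨b, hb, l, hl, hmem, rfl⟩)
    · exact h0
    · exact hFbbar g hg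
    · exact Bbar_relRng h0 (hFbbar b hb) _
  have hInC_bbar : ∀ C ∈ InC, Bbar G L C := by
    rintro C ⟨Fs, hne, hsub', rfl⟩
    exact Bbar_sInter_finset hne fun g hg => hInG_bbar g (hsub' hg)
  have hInG_relRng : ∀ g ∈ InG, ∀ l : List (List 𝒜), l ≠ [] → (∀ x ∈ l, x ∈ S) →
      relRng G L g l.flatten ∈ InG := by
    rintro g (((rfl : g = ∅) | hg) | ⟨b, hb, l0, hl0, hmem0, rfl⟩) l hl hmem
    · rw [relRng_of_empty]
      exact Or.inl (Or.inl rfl)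
    · exact Or.inr ⟨g, hg, l, hl, hmem, rfl⟩
    · refine Or.inr ⟨b, hb, l0 ++ l, by simp [hl0], ?_, ?_⟩
      · intro x hx
        rcases List.mem_append.mp hx with hx | hx
        · exact hmem0 x hx
        · exact hmem x hx
      · rw [List.flatten_append,
          relRng_append _ _ _ (flatten_ne_nil hSne hl0 hmem0) (flatten_ne_nil hSne hl hmem)]
  have hInC_inter : ∀ C ∈ InC, ∀ C' ∈ InC, C ∩ C' ∈ InC := by
    rintro C ⟨Fs, hne, hsub', rfl⟩ C' ⟨Fs', hne', hsub'', rfl⟩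
    refine ⟨Fs ∪ Fs', hne.mono Finset.subset_union_left, ?_, ?_⟩
    · rw [Finset.coe_union]
      exact Set.union_subset hsub' hsub''
    · rw [Finset.coe_union, Set.sInter_union]
  have hInC_relRng : ∀ C ∈ InC, ∀ l : List (List 𝒜), l ≠ [] → (∀ x ∈ l, x ∈ S) →
      relRng G L C l.flatten ∈ InC := by
    rintro C ⟨Fs, hne, hsub', rfl⟩ l hl hmem
    refine ⟨Fs.image (fun g => relRng G L g l.flatten), hne.image _, ?_, ?_⟩
    · intro g hg
      rw [Finset.coe_image] at hg
      obtain ⟨g0, hg0, rfl⟩ := hg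
      exact hInG_relRng g0 (hsub' hg0) l hl hmem
    · rw [Finset.coe_image,
        relRng_sInter sa.wlr h0 hne (fun g hg => hInG_bbar g (hsub' hg)) l.flatten]
  have hInC_rngW : ∀ l : List (List 𝒜), l ≠ [] → (∀ x ∈ l, x ∈ S) →
      rngW G L l.flatten ∈ InC := by
    intro l hl hmem
    cases l with
    | nil => exact absurd rfl hl
    | cons σ l' =>
      have hσS : σ ∈ S := hmem σ (by simp)
      rcases eq_or_ne l' [] with rfl | hl'
      · refine ⟨{rngW G L σ}, by simp, ?_, by simp⟩
        intro g hg
        simp only [Finset.coe_singleton, Set.mem_singleton_iff] at hg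
        subst hg
        exact Or.inl (Or.inr (Or.inr ⟨σ, hσS, rfl⟩))
      · have : (σ :: l').flatten = σ ++ l'.flatten := rfl
        refine ⟨{rngW G L ((σ :: l').flatten)}, by simp, ?_, by simp⟩
        intro g hg
        simp only [Finset.coe_singleton, Set.mem_singleton_iff] at hg
        subst hg
        rw [this, rngW_append σ l'.flatten (hSne σ hσS)
          (flatten_ne_nil hSne hl' (fun x hx => hmem x (by simp [hx])))]
        exact Or.inr ⟨rngW G L σ, Or.inr ⟨σ, hσS, rfl⟩, l', hl',
          fun x hx => hmem x (by simp [hx]), rfl⟩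
  have hInW_ne : ∀ o ∈ InW, ∀ u, o = some u → u ≠ [] := by
    rintro o (rfl | ⟨l, hl, hmem, rfl⟩) u h
    · exact absurd h (by simp)
    · cases h
      exact flatten_ne_nil hSne hl hmem
  have hInW_oapp : ∀ o ∈ InW, ∀ l : List (List 𝒜), l ≠ [] → (∀ x ∈ l, x ∈ S) →
      oapp o l.flatten ∈ InW := by
    rintro o (rfl | ⟨l0, hl0, hmem0, rfl⟩) l hl hmem
    · exact Or.inr ⟨l, hl, hmem, rfl⟩
    · refine Or.inr ⟨l0 ++ l, by simp [hl0], ?_, ?_⟩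
      · intro x hx
        rcases List.mem_append.mp hx with hx | hx
        · exact hmem0 x hx
        · exact hmem x hx
      · show some (l0.flatten ++ l.flatten) = some ((l0 ++ l).flatten)
        rw [List.flatten_append]
  -- the spanning set
  set X : Set B := insert 0 {x | ∃ μ C ν, (μ ∈ InW ∧ ν ∈ InW ∧ C ∈ InC ∧
    C ⊆ owordRng G L μ ∧ C ⊆ owordRng G L ν) ∧ x = rep.elt μ C ν} with hXdef
  -- helper: appended words control ranges
  have hsub_oapp : ∀ μ ∈ InW, ∀ C C0 : Set V, C0 ⊆ C → C ⊆ owordRng G L μ →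
      ∀ τ : List 𝒜, τ ≠ [] → relRng G L C0 τ ⊆ owordRng G L (oapp μ τ) := by
    intro μ hμ C C0 hC0 hCr τ hτ
    cases μ with
    | none => exact relRng_subset_rngW _ _
    | some u =>
      have hu : u ≠ [] := hInW_ne _ hμ u rfl
      exact relRng_subset_rngW_append (fun x hx => hCr (hC0 hx)) τ hu hτ
  have hInW_pieces : ∀ o ∈ InW, ∀ u, o = some u →
      ∃ l : List (List 𝒜), l ≠ [] ∧ (∀ x ∈ l, x ∈ S) ∧ u = l.flatten := by
    rintro o (rfl | ⟨l, hl, hmem, rfl⟩) u h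
    · simp at h
    · cases h
      exact ⟨l, hl, hmem, rfl⟩
  have hsufpieces : ∀ u τ : List 𝒜, (some u) ∈ InW → τ ≠ [] → τ <:+ u →
      ∃ l : List (List 𝒜), l ≠ [] ∧ (∀ x ∈ l, x ∈ S) ∧ τ = l.flatten := by
    intro u τ hu hτ hsuf
    obtain ⟨l, hl, hmem, rfl⟩ := hInW_pieces _ hu u rfl
    obtain ⟨l', h1, _, h3, h4⟩ := suffix_of_flattens hSsuf l hmem τ hτ hsuf
    exact ⟨l', h1, h3, h4⟩
  -- closure of X under multiplication
  have hXmul : ∀ x ∈ X, ∀ y ∈ X, x * y ∈ X := by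
    rintro x (rfl | ⟨μ, C, ν, ⟨hμW, hνW, hCin, hCl, hCr⟩, rfl⟩) y hy
    · rw [zero_mul]; exact Set.mem_insert 0 _
    rcases hy with rfl | ⟨μ', C', ν', ⟨hμ'W, hν'W, hC'in, hC'l, hC'r⟩, rfl⟩
    · rw [mul_zero]; exact Set.mem_insert 0 _
    have hC : Bbar G L C := hInC_bbar C hCin
    have hC' : Bbar G L C' := hInC_bbar C' hC'in
    rcases elt_mul_elt rep hL h0 hC hC' μ ν μ' ν' (hInW_ne μ hμW) (hInW_ne ν hνW)
        (hInW_ne μ' hμ'W) (hInW_ne ν' hν'W) with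
      h | ⟨hν0, hμ'0, heq⟩ | ⟨w, hw, hν0, hμ'0, heq⟩ | ⟨v, hv, hν0, hμ'0, heq⟩ |
      ⟨v, hv, hν0, hμ'0, heq⟩ | ⟨v, τ, hv, hτ, hν0, hμ'0, heq⟩ |
      ⟨w, τ, hw, hτ, hν0, hμ'0, heq⟩
    · rw [h]; exact Set.mem_insert 0 _
    · -- both middle words empty
      rw [heq]
      refine Set.mem_insert_iff.mpr (Or.inr ⟨μ, _, ν', ⟨hμW, hν'W, ?_, ?_, ?_⟩, rfl⟩)
      · exact hInC_inter _ (hInC_inter _ hCin _ (hInC_inter _ hCin _ hC'in)) _ hC'in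
      · exact fun x hx => hCl hx.1.1
      · exact fun x hx => hC'r hx.2
    · -- ν = ε, μ' = w
      subst hν0; subst hμ'0
      obtain ⟨lw, hlw, hlwS, hwfl⟩ := hInW_pieces _ hμ'W w rfl
      rw [heq]
      refine Set.mem_insert_iff.mpr (Or.inr ⟨oapp μ w, _, ν', ⟨?_, hν'W, ?_, ?_, ?_⟩, rfl⟩)
      · rw [hwfl]; exact hInW_oapp μ hμW lw hlw hlwS
      · refine hInC_inter _ (hInC_inter _ ?_ _ hC'in) _ hC'in
        rw [hwfl]; exact hInC_relRng C hCin lw hlw hlwS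
      · exact fun x hx => hsub_oapp μ hμW C C (fun y hy => hy) hCl w hw hx.1.1
      · exact fun x hx => hC'r hx.2
    · -- ν = v, μ' = ε
      subst hν0; subst hμ'0
      obtain ⟨lv, hlv, hlvS, hvfl⟩ := hInW_pieces _ hνW v rfl
      rw [heq]
      refine Set.mem_insert_iff.mpr (Or.inr ⟨μ, _, oapp ν' v, ⟨hμW, ?_, ?_, ?_, ?_⟩, rfl⟩)
      · rw [hvfl]; exact hInW_oapp ν' hν'W lv hlv hlvS
      · refine hInC_inter _ (hInC_inter _ ?_ _ (hInC_inter _ hCin _ ?_)) _ hCin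
        · rw [hvfl]; exact hInC_relRng C' hC'in lv hlv hlvS
        · rw [hvfl]; exact hInC_relRng C' hC'in lv hlv hlvS
      · exact fun x hx => hCl hx.2
      · exact fun x hx => hsub_oapp ν' hν'W C' C' (fun y hy => hy) hC'r v hv hx.1.1
    · -- ν = μ' = v
      subst hν0; subst hμ'0
      obtain ⟨lv, hlv, hlvS, hvfl⟩ := hInW_pieces _ hνW v rfl
      rw [heq]
      refine Set.mem_insert_iff.mpr (Or.inr ⟨μ, _, ν', ⟨hμW, hν'W, ?_, ?_, ?_⟩, rfl⟩)
      · refine hInC_inter _ (hInC_inter _ hCin _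
          (hInC_inter _ (hInC_inter _ hCin _ ?_) _ hC'in)) _ hC'in
        rw [hvfl]; exact hInC_rngW lv hlv hlvS
      · exact fun x hx => hCl hx.1.1
      · exact fun x hx => hC'r hx.2
    · -- ν = v, μ' = v ++ τ
      subst hν0; subst hμ'0
      obtain ⟨lv, hlv, hlvS, hvfl⟩ := hInW_pieces _ hνW v rfl
      obtain ⟨lτ, hlτ, hlτS, hτfl⟩ := hsufpieces (v ++ τ) τ hμ'W hτ (List.suffix_append v τ)
      rw [heq]
      refine Set.mem_insert_iff.mpr
        (Or.inr ⟨oapp μ τ, _, ν', ⟨?_, hν'W, ?_, ?_, ?_⟩, rfl⟩)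
      · rw [hτfl]; exact hInW_oapp μ hμW lτ hlτ hlτS
      · refine hInC_inter _ (hInC_inter _ ?_ _ hC'in) _ hC'in
        have h1 : C ∩ (C ∩ rngW G L v) ∈ InC := by
          refine hInC_inter _ hCin _ (hInC_inter _ hCin _ ?_)
          rw [hvfl]; exact hInC_rngW lv hlv hlvS
        rw [hτfl]; exact hInC_relRng _ h1 lτ hlτ hlτS
      · exact fun x hx => hsub_oapp μ hμW C (C ∩ (C ∩ rngW G L v))
          (fun y hy => hy.1) hCl τ hτ hx.1.1
      · exact fun x hx => hC'r hx.2
    · -- ν = w ++ τ, μ' = w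
      subst hν0; subst hμ'0
      obtain ⟨lw, hlw, hlwS, hwfl⟩ := hInW_pieces _ hμ'W w rfl
      obtain ⟨lτ, hlτ, hlτS, hτfl⟩ := hsufpieces (w ++ τ) τ hνW hτ (List.suffix_append w τ)
      rw [heq]
      refine Set.mem_insert_iff.mpr
        (Or.inr ⟨μ, _, oapp ν' τ, ⟨hμW, ?_, ?_, ?_, ?_⟩, rfl⟩)
      · rw [hτfl]; exact hInW_oapp ν' hν'W lτ hlτ hlτS
      · refine hInC_inter _ (hInC_inter _ ?_ _ (hInC_inter _ hCin _ ?_)) _ hCin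
        · rw [hτfl]; exact hInC_relRng C' hC'in lτ hlτ hlτS
        · have h1 : rngW G L w ∩ C' ∈ InC := by
            refine hInC_inter _ ?_ _ hC'in
            rw [hwfl]; exact hInC_rngW lw hlw hlwS
          rw [hτfl]; exact hInC_relRng _ h1 lτ hlτ hlτS
      · exact fun x hx => hCl hx.2
      · exact fun x hx => hsub_oapp ν' hν'W C' C' (fun y hy => hy) hC'r τ hτ hx.1.1
  -- closure of X under star
  have hXstar : ∀ x ∈ X, star x ∈ X := by
    rintro x (rfl | ⟨μ, C, ν, ⟨hμW, hνW, hCin, hCl, hCr⟩, rfl⟩)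
    · rw [star_zero]; exact Set.mem_insert 0 _
    · rw [star_elt rep (hInC_bbar C hCin)]
      exact Set.mem_insert_iff.mpr (Or.inr ⟨ν, C, μ, ⟨hνW, hμW, hCin, hCr, hCl⟩, rfl⟩)
  -- finiteness of X
  set Wfin : Set (Option (List 𝒜)) := insert none (some '' flattens S m0) with hWfindef
  have hWfin : Wfin.Finite := ((flattens_finite hSfin m0).image some).insert none
  set Gfin : Set (Set V) := insert ∅
    (ℱ ∪ Set.image2 (fun b w => relRng G L b w) ℱ (flattens S m0)) with hGfindef
  have hGfin : Gfin.Finite :=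
    (hFfin.union (Set.Finite.image2 _ hFfin (flattens_finite hSfin m0))).insert ∅
  have hInGsub : InG ⊆ Gfin := by
    rintro g (((rfl : g = ∅) | hg) | ⟨b, hb, l, hl, hmem, rfl⟩)
    · exact Set.mem_insert ∅ _
    · exact Set.mem_insert_iff.mpr (Or.inr (Or.inl hg))
    · by_cases hlen : l.length ≤ m0
      · exact Set.mem_insert_iff.mpr (Or.inr (Or.inr
          (Set.mem_image2_of_mem hb ⟨l, hl, hlen, hmem, rfl⟩)))
      · rw [hErel b hb l hl hmem (by omega)]
        exact Set.mem_insert ∅ _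
  set Cfin : Set (Set V) :=
    (fun Fs : Finset (Set V) => ⋂₀ (Fs : Set (Set V))) ''
      {Fs : Finset (Set V) | ↑Fs ⊆ Gfin} with hCfindef
  have hCfin : Cfin.Finite := by
    apply Set.Finite.image
    have : {Fs : Finset (Set V) | ↑Fs ⊆ Gfin} =
        (fun Fs : Finset (Set V) => (↑Fs : Set (Set V))) ⁻¹' {t | t ⊆ Gfin} := rfl
    rw [this]
    exact Set.Finite.preimage (Finset.coe_injective.injOn) hGfin.finite_subsets
  have hInCsub : InC ⊆ Cfin := by
    rintro C ⟨Fs, hne, hsubG, rfl⟩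
    exact ⟨Fs, fun g hg => hInGsub (hsubG hg), rfl⟩
  have hXfin : X.Finite := by
    apply Set.Finite.subset (Set.Finite.insert 0
      ((hWfin.prod (hCfin.prod hWfin)).image
        (fun t : Option (List 𝒜) × Set V × Option (List 𝒜) => rep.elt t.1 t.2.1 t.2.2)))
    rintro x (rfl | ⟨μ, C, ν, ⟨hμW, hνW, hCin, hCl, hCr⟩, rfl⟩)
    · exact Set.mem_insert 0 _
    · by_cases hCe : C = ∅
      · subst hCe
        rw [elt_empty]
        exact Set.mem_insert 0 _
      · have hWmem : ∀ o ∈ InW, C ⊆ owordRng G L o → o ∈ Wfin := by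
          rintro o (rfl | ⟨l, hl, hmem, rfl⟩) hCo
          · exact Set.mem_insert none _
          · refine Set.mem_insert_iff.mpr (Or.inr ⟨l.flatten, ⟨l, hl, ?_, hmem, rfl⟩, rfl⟩)
            by_contra hlen
            refine hCe (Set.subset_empty_iff.mp ?_)
            rw [← hErngW l hl hmem (by omega)]
            exact hCo
        exact Set.mem_insert_iff.mpr (Or.inr ⟨(μ, C, ν),
          ⟨hWmem μ hμW hCl, hInCsub hCin, hWmem ν hνW hCr⟩, rfl⟩)
  -- base elements belong to X
  have hbase : ∀ i, rep.elt (αs i) (As i) (βs i) ∈ X := by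
    intro i
    have hInWword : ∀ (o : Option (List 𝒜)),
        (∀ w, o = some w → IsLabelWord G L w) →
        (∀ w, o = some w → (∃ i', αs i' = o ∨ βs i' = o)) → o ∈ InW := by
      intro o h1 h2
      cases o with
      | none => exact Set.mem_insert none _
      | some w =>
        have hword := h1 w rfl
        have hwne : w ≠ [] := isLabelWord_ne_nil hword
        obtain ⟨i', hi'⟩ := h2 w rfl
        have hwS : w ∈ S := ⟨hwne, w, List.suffix_refl w, i', hi'⟩
        refine Set.mem_insert_iff.mpr (Or.inr ⟨[w], by simp, ?_, by simp⟩)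
        intro x hx
        rw [List.mem_singleton] at hx
        subst hx
        exact hwS
    refine Set.mem_insert_iff.mpr (Or.inr ⟨αs i, As i, βs i, ⟨?_, ?_, ?_, ?_, ?_⟩, rfl⟩)
    · exact hInWword (αs i) (hαs i) (fun w hw => ⟨i, Or.inl rfl⟩)
    · exact hInWword (βs i) (hβs i) (fun w hw => ⟨i, Or.inr rfl⟩)
    · refine ⟨{As i}, by simp, ?_, by simp⟩
      intro g hg
      simp only [Finset.coe_singleton, Set.mem_singleton_iff] at hg
      subst hg
      exact Or.inl (Or.inr (Or.inl ⟨i, rfl⟩))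
    · exact fun x hx => (hsub i hx).1
    · exact fun x hx => (hsub i hx).2
  obtain ⟨D, hDfd, hDsub⟩ := span_closed_fd X hXfin hXmul hXstar
  exact ⟨D, hDfd, fun i => hDsub (hbase i)⟩
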